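/- Let a : ℝ → ℂ be a Schwartz function and let c > 0. Then the function M : ℝ → ℂ defined by M(y) = ∫_0^∞ t^{c+iy−1} a(t) dt (which is absolutely convergent for every y ∈ ℝ) is a Schwartz function of y ∈ ℝ; in particular y ↦ M(y) belongs to L¹(ℝ). -/

import Mathlib

open MeasureTheory

open MeasureTheory Real Filter Set
open scoped FourierTransform ContDiff

noncomputable section MellinSchwartzAux

/-- Functions that are finite combinations of `x ↦ exp (s*x) • f (exp (-x))` with `s < 0`
and `f` Schwartz. -/
inductive NiceComb : (ℝ → ℂ) → Prop
  | base (s : ℝ) (hs : s < 0) (f : SchwartzMap ℝ ℂ) :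
      NiceComb (fun x => Real.exp (s * x) • f (Real.exp (-x)))
  | add {h₁ h₂ : ℝ → ℂ} : NiceComb h₁ → NiceComb h₂ → NiceComb (fun x => h₁ x + h₂ x)
  | smul (z : ℂ) {h : ℝ → ℂ} : NiceComb h → NiceComb (fun x => z * h x)

lemma NiceComb.contDiff {h : ℝ → ℂ} (hh : NiceComb h) : ContDiff ℝ ∞ h := by
  induction hh with
  | base s hs f =>
      have : ContDiff ℝ ∞ (fun x : ℝ => Real.exp (s * x)) :=
        Real.contDiff_exp.comp (contDiff_const.mul contDiff_id)
      have h2 : ContDiff ℝ ∞ (fun x : ℝ => f (Real.exp (-x))) := by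
        exact ContDiff.comp (f.smooth ⊤) (by fun_prop)
      exact this.smul h2
  | add _ _ ih1 ih2 => exact ih1.add ih2
  | smul z _ ih => exact contDiff_const.mul ih

lemma base_hasDerivAt (s : ℝ) (f : SchwartzMap ℝ ℂ) (x : ℝ) :
    HasDerivAt (fun x => Real.exp (s * x) • f (Real.exp (-x)))
      (Real.exp (s * x) • ((-Real.exp (-x)) • deriv f (Real.exp (-x)))
        + (Real.exp (s * x) * s) • f (Real.exp (-x))) x := by
  have h1 : HasDerivAt (fun x : ℝ => Real.exp (-x)) (-Real.exp (-x)) x := by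
    simpa [Function.comp_def] using (Real.hasDerivAt_exp (-x)).comp x (hasDerivAt_neg x)
  have h2 : HasDerivAt (fun x : ℝ => f (Real.exp (-x)))
      ((-Real.exp (-x)) • deriv f (Real.exp (-x))) x :=
    (f.differentiableAt.hasDerivAt).scomp x h1
  have h3 : HasDerivAt (fun x : ℝ => Real.exp (s * x)) (Real.exp (s * x) * s) x := by
    simpa [Function.comp_def] using (Real.hasDerivAt_exp (s * x)).comp x ((hasDerivAt_id x).const_mul s)
  exact h3.smul h2

lemma NiceComb.deriv {h : ℝ → ℂ} (hh : NiceComb h) : NiceComb (_root_.deriv h) := by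
  induction hh with
  | base s hs f =>
      have key : _root_.deriv (fun x => Real.exp (s * x) • f (Real.exp (-x)))
          = fun x => (s : ℂ) * (Real.exp (s * x) • f (Real.exp (-x)))
            + (-1 : ℂ) * (Real.exp ((s - 1) * x) • (SchwartzMap.derivCLM ℝ ℂ f) (Real.exp (-x))) := by
        funext x
        rw [(base_hasDerivAt s f x).deriv]
        rw [show (s - 1) * x = s * x + -x by ring, Real.exp_add]
        simp only [SchwartzMap.derivCLM_apply, Complex.real_smul, smul_eq_mul]
        push_cast
        ring
      rw [key]
      exact NiceComb.add (NiceComb.smul _ (NiceComb.base s hs f))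
        (NiceComb.smul _ (NiceComb.base (s - 1) (by linarith) (SchwartzMap.derivCLM ℝ ℂ f)))
  | @add h₁ h₂ hh1 hh2 ih1 ih2 =>
      have d1 := (hh1.contDiff.differentiable (by simp))
      have d2 := (hh2.contDiff.differentiable (by simp))
      have : _root_.deriv (fun x => h₁ x + h₂ x)
          = fun x => _root_.deriv h₁ x + _root_.deriv h₂ x := by
        funext x; exact deriv_fun_add (d1 x) (d2 x)
      rw [this]; exact ih1.add ih2
  | @smul z h₀ hh ih =>
      have d := hh.contDiff.differentiable (by simp)
      have : _root_.deriv (fun x => z * h₀ x) = fun x => z * _root_.deriv h₀ x := by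
        funext x; exact deriv_const_mul z (d x)
      rw [this]; exact ih.smul z



section Decay

lemma pow_mul_exp_neg_le {r : ℝ} (hr : 0 < r) (k : ℕ) {x : ℝ} (hx : 0 ≤ x) :
    x ^ k * Real.exp (-(r * x)) ≤ ((k : ℝ) / r) ^ k := by
  rcases Nat.eq_zero_or_pos k with hk | hk
  · subst hk
    have h : Real.exp (-(r * x)) ≤ 1 := Real.exp_le_one_iff.mpr (by nlinarith)
    simpa using h
  · have hk0 : (0 : ℝ) < (k : ℝ) := by exact_mod_cast hk
    have key : x * Real.exp (-(r * x) / k) ≤ (k : ℝ) / r := by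
      have h1 : r * x / k ≤ Real.exp (r * x / k) :=
        le_trans (le_add_of_nonneg_right zero_le_one) (Real.add_one_le_exp _)
      have h2 : (r * x / k) * Real.exp (-(r * x / k)) ≤ 1 := by
        rw [Real.exp_neg, ← div_eq_mul_inv]
        exact (div_le_one (Real.exp_pos _)).mpr h1
      have h3 : x * Real.exp (-(r * x) / k)
          = ((k : ℝ) / r) * ((r * x / k) * Real.exp (-(r * x / k))) := by
        rw [neg_div]
        field_simp
      rw [h3]
      calc ((k : ℝ) / r) * ((r * x / k) * Real.exp (-(r * x / k)))
          ≤ ((k : ℝ) / r) * 1 := by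
            apply mul_le_mul_of_nonneg_left h2 (by positivity)
        _ = (k : ℝ) / r := mul_one _
    calc x ^ k * Real.exp (-(r * x))
        = (x * Real.exp (-(r * x) / k)) ^ k := by
          rw [mul_pow, ← Real.exp_nat_mul, mul_div_cancel₀ _ (ne_of_gt hk0)]
      _ ≤ ((k : ℝ) / r) ^ k := pow_le_pow_left₀ (by positivity) key k

lemma base_decay (s : ℝ) (hs : s < 0) (f : SchwartzMap ℝ ℂ) (k : ℕ) :
    ∃ C : ℝ, ∀ x : ℝ, ‖x‖ ^ k * ‖Real.exp (s * x) • f (Real.exp (-x))‖ ≤ C := by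
  obtain ⟨C0, hC0pos, hC0⟩ := f.decay 0 0
  set N : ℕ := ⌈-s⌉₊ + 1 with hN
  have hsN : 0 < s + N := by
    have h1 : -s ≤ (⌈-s⌉₊ : ℝ) := Nat.le_ceil _
    have : ((N : ℝ)) = (⌈-s⌉₊ : ℝ) + 1 := by exact_mod_cast hN
    rw [this]; linarith
  obtain ⟨C1, hC1pos, hC1⟩ := f.decay N 0
  simp only [norm_iteratedFDeriv_zero, pow_zero, one_mul] at hC0
  simp only [norm_iteratedFDeriv_zero] at hC1
  have hdivnn1 : (0 : ℝ) ≤ ((k : ℝ) / (-s)) ^ k :=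
    pow_nonneg (div_nonneg (Nat.cast_nonneg k) (by linarith)) k
  refine ⟨max (((k : ℝ) / (-s)) ^ k * C0) (((k : ℝ) / (s + N)) ^ k * C1), fun x => ?_⟩
  have hnorm : ‖Real.exp (s * x) • f (Real.exp (-x))‖
      = Real.exp (s * x) * ‖f (Real.exp (-x))‖ := by
    rw [norm_smul, Real.norm_eq_abs, abs_of_pos (Real.exp_pos _)]
  rcases le_or_gt 0 x with hx | hx
  · have h1 : x ^ k * Real.exp (-(-s * x)) ≤ ((k : ℝ) / (-s)) ^ k :=
      pow_mul_exp_neg_le (by linarith) k hx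
    rw [show -(-s * x) = s * x by ring] at h1
    rw [hnorm, Real.norm_eq_abs, abs_of_nonneg hx]
    refine le_trans ?_ (le_max_left _ _)
    calc x ^ k * (Real.exp (s * x) * ‖f (Real.exp (-x))‖)
        = (x ^ k * Real.exp (s * x)) * ‖f (Real.exp (-x))‖ := by ring
      _ ≤ ((k : ℝ) / (-s)) ^ k * C0 :=
          mul_le_mul h1 (hC0 _) (norm_nonneg _) hdivnn1
  · have hx' : 0 ≤ -x := by linarith
    have hC1x := hC1 (Real.exp (-x))
    rw [Real.norm_eq_abs, abs_of_pos (Real.exp_pos _)] at hC1x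
    have hexpN : Real.exp (-x) ^ N = Real.exp (-((N : ℝ) * x)) := by
      rw [← Real.exp_nat_mul]; ring_nf
    have hfx1 : ‖f (Real.exp (-x))‖ ≤ Real.exp ((N : ℝ) * x) * C1 := by
      have h3 := mul_le_mul_of_nonneg_left hC1x (Real.exp_pos ((N : ℝ) * x)).le
      rw [hexpN, ← mul_assoc, ← Real.exp_add, add_neg_cancel, Real.exp_zero, one_mul] at h3
      exact h3
    rw [hnorm, Real.norm_eq_abs, abs_of_neg hx]
    have h1 : (-x) ^ k * Real.exp (-((s + N) * (-x))) ≤ ((k : ℝ) / (s + N)) ^ k :=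
      pow_mul_exp_neg_le hsN k hx'
    refine le_trans ?_ (le_max_right _ _)
    calc (-x) ^ k * (Real.exp (s * x) * ‖f (Real.exp (-x))‖)
        ≤ (-x) ^ k * (Real.exp (s * x) * (Real.exp ((N : ℝ) * x) * C1)) := by
          apply mul_le_mul_of_nonneg_left _ (pow_nonneg hx' k)
          exact mul_le_mul_of_nonneg_left hfx1 (Real.exp_pos _).le
      _ = ((-x) ^ k * Real.exp (-((s + N) * (-x)))) * C1 := by
          rw [show -((s + N) * (-x)) = s * x + (N : ℝ) * x by ring, Real.exp_add]; ring
      _ ≤ ((k : ℝ) / (s + N)) ^ k * C1 := mul_le_mul_of_nonneg_right h1 hC1pos.le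

lemma NiceComb.decay {h : ℝ → ℂ} (hh : NiceComb h) (k : ℕ) :
    ∃ C : ℝ, ∀ x : ℝ, ‖x‖ ^ k * ‖h x‖ ≤ C := by
  induction hh with
  | base s hs f => exact base_decay s hs f k
  | @add h₁ h₂ _ _ ih1 ih2 =>
      obtain ⟨C1, hC1⟩ := ih1
      obtain ⟨C2, hC2⟩ := ih2
      refine ⟨C1 + C2, fun x => ?_⟩
      calc ‖x‖ ^ k * ‖h₁ x + h₂ x‖ ≤ ‖x‖ ^ k * (‖h₁ x‖ + ‖h₂ x‖) :=
            mul_le_mul_of_nonneg_left (norm_add_le _ _) (by positivity)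
        _ = ‖x‖ ^ k * ‖h₁ x‖ + ‖x‖ ^ k * ‖h₂ x‖ := by ring
        _ ≤ C1 + C2 := add_le_add (hC1 x) (hC2 x)
  | @smul z h₀ _ ih =>
      obtain ⟨C, hC⟩ := ih
      refine ⟨‖z‖ * C, fun x => ?_⟩
      rw [norm_mul]
      calc ‖x‖ ^ k * (‖z‖ * ‖h₀ x‖) = ‖z‖ * (‖x‖ ^ k * ‖h₀ x‖) := by ring
        _ ≤ ‖z‖ * C := mul_le_mul_of_nonneg_left (hC x) (norm_nonneg z)

lemma NiceComb.iteratedDeriv {h : ℝ → ℂ} (hh : NiceComb h) (n : ℕ) :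
    NiceComb (iteratedDeriv n h) := by
  induction n with
  | zero => simpa [iteratedDeriv_zero] using hh
  | succ n ih => rw [iteratedDeriv_succ]; exact ih.deriv

/-- A `NiceComb` function is a Schwartz function. -/
def NiceComb.toSchwartz (h : ℝ → ℂ) (hh : NiceComb h) : SchwartzMap ℝ ℂ where
  toFun := h
  smooth' := hh.contDiff
  decay' := by
    intro k n
    obtain ⟨C, hC⟩ := (hh.iteratedDeriv n).decay k
    exact ⟨C, fun x => by
      simpa [norm_iteratedFDeriv_eq_norm_iteratedDeriv] using hC x⟩

end Decay

end MellinSchwartzAux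

open Complex in
/-- For a Schwartz function `a : ℝ → ℂ` and `c > 0`, the Mellin transform
restricted to the vertical line `Re z = c`, `M(y) = ∫_0^∞ t^{c+iy-1} a(t) dt`, is absolutely
convergent for every `y`, defines a Schwartz function of `y`, and in particular belongs
to `L¹(ℝ)`. -/
theorem mellin_transform_on_vertical_line_schwartz
    (a : SchwartzMap ℝ ℂ) (c : ℝ) (hc : 0 < c) :
    (∀ y : ℝ, IntegrableOn
        (fun t : ℝ => (t : ℂ) ^ ((c : ℂ) + Complex.I * (y : ℝ) - 1) * a t)
        (Set.Ioi (0 : ℝ))) ∧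
    (∃ M : SchwartzMap ℝ ℂ, ∀ y : ℝ,
        M y = ∫ t in Set.Ioi (0 : ℝ),
          (t : ℂ) ^ ((c : ℂ) + Complex.I * (y : ℝ) - 1) * a t) ∧
    Integrable (fun y : ℝ => ∫ t in Set.Ioi (0 : ℝ),
        (t : ℂ) ^ ((c : ℂ) + Complex.I * (y : ℝ) - 1) * a t) := by
  have hg : NiceComb (fun x => Real.exp (-c * x) • a (Real.exp (-x))) :=
    NiceComb.base (-c) (by linarith) a
  set G : SchwartzMap ℝ ℂ := NiceComb.toSchwartz _ hg with hGdef
  have hGcoe : ⇑G = fun x => Real.exp (-c * x) • a (Real.exp (-x)) := rfl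
  -- the key identity
  have key : ∀ y : ℝ,
      (∫ t in Set.Ioi (0 : ℝ), (t : ℂ) ^ ((c : ℂ) + Complex.I * (y : ℝ) - 1) * a t)
        = 𝓕 (⇑G) (y / (2 * π)) := by
    intro y
    have hre : ((c : ℂ) + Complex.I * (y : ℝ)).re = c := by simp
    have him : ((c : ℂ) + Complex.I * (y : ℝ)).im = y := by simp
    have h := mellin_eq_fourier (⇑a) (s := (c : ℂ) + Complex.I * (y : ℝ))
    rw [hre, him] at h
    rw [hGcoe, ← h, mellin]
    simp only [smul_eq_mul]
  -- convergence
  have conv : ∀ y : ℝ, IntegrableOn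
      (fun t : ℝ => (t : ℂ) ^ ((c : ℂ) + Complex.I * (y : ℝ) - 1) * a t)
      (Set.Ioi (0 : ℝ)) := by
    intro y
    have hre : ((c : ℂ) + Complex.I * (y : ℝ)).re = c := by simp
    have hfc : LocallyIntegrableOn (⇑a) (Set.Ioi (0 : ℝ)) :=
      (a.continuous.locallyIntegrable).locallyIntegrableOn _
    have htop : (⇑a) =O[atTop] fun t : ℝ => t ^ (-(c + 1)) := by
      have h1 := a.isBigO_cocompact_rpow (-(c + 1))
      have h2 : (⇑a) =O[atTop] fun t : ℝ => ‖t‖ ^ (-(c + 1)) :=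
        h1.mono (le_trans le_sup_right cocompact_eq_atBot_atTop.ge)
      exact h2.congr' (Filter.EventuallyEq.refl _ _)
        ((eventually_gt_atTop 0).mono fun t ht => by
          simp [Real.norm_eq_abs, abs_of_pos ht])
    have hbot : (⇑a) =O[nhdsWithin 0 (Set.Ioi 0)] fun t : ℝ => t ^ (-(0 : ℝ)) := by
      have ht : Filter.Tendsto (⇑a) (nhdsWithin 0 (Set.Ioi 0)) (nhds (a 0)) :=
        (a.continuous.tendsto 0).mono_left nhdsWithin_le_nhds
      simpa [Real.rpow_zero] using ht.isBigO_one ℝ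
    have hmc := mellinConvergent_of_isBigO_rpow hfc htop
      (by rw [hre]; linarith) hbot (by rw [hre]; exact hc)
    simpa [MellinConvergent, smul_eq_mul] using hmc
  have h2pi : ((2 * π)⁻¹ : ℝ) ≠ 0 := by
    have : (0 : ℝ) < 2 * π := by positivity
    exact inv_ne_zero this.ne'
  set L : ℝ ≃L[ℝ] ℝ := ContinuousLinearEquiv.unitsEquivAut ℝ (Units.mk0 _ h2pi) with hL
  set Mmap : SchwartzMap ℝ ℂ :=
    SchwartzMap.compCLMOfContinuousLinearEquiv ℂ L
      (SchwartzMap.fourierTransformCLM ℂ G) with hMmap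
  have hMval : ∀ y : ℝ,
      Mmap y = ∫ t in Set.Ioi (0 : ℝ),
        (t : ℂ) ^ ((c : ℂ) + Complex.I * (y : ℝ) - 1) * a t := by
    intro y
    rw [key y]
    show (SchwartzMap.fourierTransformCLM ℂ G) (L y) = _
    rw [SchwartzMap.fourierTransformCLM_apply]
    have hLy : L y = y / (2 * π) := by
      simp [hL, ContinuousLinearEquiv.unitsEquivAut_apply, div_eq_mul_inv]
    rw [hLy]; rfl
  exact ⟨conv, ⟨Mmap, hMval⟩,
    Mmap.integrable.congr (Filter.Eventually.of_forall fun y => hMval y)⟩
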